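/- Let G be a cofinitary group, T ∈ I_i(G)^+, t ∈ T, and (s,E) a condition of Zhang's forcing Z_G. Then there exist a condition (s',E) of Z_G with (s',E) ≤ (s,E), an element t' ∈ T with t ⊆ t', and k ∈ dom(t') \ dom(t) such that t'(k) = s'(k). -/

import Mathlib

noncomputable section

/-- Permutations of the natural numbers (elements of `S_∞`). -/
abbrev Perm' := Equiv.Perm ℕ

/-- A letter of a word over `G ∪ {x, x⁻¹}`: either a group element (of `S_∞`),
or `Sum.inr true` standing for `x`, or `Sum.inr false` standing for `x⁻¹`. -/
abbrev Letter := Perm' ⊕ Bool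

/-- A word is a list of letters, written left to right
(the leftmost letter is applied last). -/
abbrev Word := List Letter

/-- A subgroup of `S_∞` is cofinitary if every non-identity element
has only finitely many fixed points. -/
def Cofinitary (G : Subgroup Perm') : Prop :=
  ∀ g ∈ G, g ≠ 1 → {n : ℕ | g n = n}.Finite

/-- A set of pairs is a partial injection (functional and injective). -/
def PartInj (s : Set (ℕ × ℕ)) : Prop :=
  (∀ ⦃a b c⦄, (a, b) ∈ s → (a, c) ∈ s → b = c) ∧
  (∀ ⦃a b c⦄, (a, c) ∈ s → (b, c) ∈ s → a = b)

/-- Domain of a partial injection given as a set of pairs. -/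
def pdom (s : Set (ℕ × ℕ)) : Set ℕ := Prod.fst '' s

/-- Range of a partial injection given as a set of pairs. -/
def pran (s : Set (ℕ × ℕ)) : Set ℕ := Prod.snd '' s

/-- The relation given by substituting the partial injection `s` for `x`
(and `s⁻¹` for `x⁻¹`) in a single letter. -/
def letterRel (s : Set (ℕ × ℕ)) : Letter → ℕ → ℕ → Prop
  | Sum.inl g => fun a b => g a = b
  | Sum.inr true => fun a b => (a, b) ∈ s
  | Sum.inr false => fun a b => (b, a) ∈ s

/-- The relation `w[s]`: evaluation of a word at the partial injection `s`,
composing the letter relations (rightmost letter applied first). -/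
def wordRel (s : Set (ℕ × ℕ)) : Word → ℕ → ℕ → Prop
  | [] => fun a b => a = b
  | l :: w => fun a b => ∃ c, wordRel s w a c ∧ letterRel s l c b

/-- `fix(w[s])`, the set of fixed points of the partial injection `w[s]`. -/
def wordFix (s : Set (ℕ × ℕ)) (w : Word) : Set ℕ := {n | wordRel s w n n}

/-- The word `x^k` for an integer `k` (for `k < 0`, `|k|` copies of `x⁻¹`). -/
def xpow (k : ℤ) : Word :=
  if 0 ≤ k then List.replicate k.toNat (Sum.inr true : Letter)
  else List.replicate (-k).toNat (Sum.inr false : Letter)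

/-- The block `g x^k` as a word. -/
def blockWord (p : Perm' × ℤ) : Word := Sum.inl p.1 :: xpow p.2

/-- `w` is a nice word (member of `W*_G`): `w = x^{k₀}` with `k₀ > 0`, or
`w = g_l x^{k_l} ⋯ g₁ x^{k₁} g₀ x^{k₀}` with `k₀ > 0`, all `k_i ≠ 0` and all
`g_i ∈ G \ {id}`. -/
def IsNice (G : Subgroup Perm') (w : Word) : Prop :=
  (∃ k : ℕ, 0 < k ∧ w = xpow (k : ℤ)) ∨
  (∃ bs : List (Perm' × ℤ), bs ≠ [] ∧
    (∀ p ∈ bs, p.1 ∈ G ∧ p.1 ≠ 1 ∧ p.2 ≠ 0) ∧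
    (∃ p, bs.getLast? = some p ∧ 0 < p.2) ∧
    w = (bs.map blockWord).flatten)

/-- The number of occurrences of `x` or `x⁻¹` in a word. -/
def xOccurrences (w : Word) : ℕ := w.countP (fun l => l.isRight)

/-- `w ∈ W¹_G`: a nice word with exactly one occurrence of `x` or `x⁻¹`. -/
def IsNiceOne (G : Subgroup Perm') (w : Word) : Prop :=
  IsNice G w ∧ xOccurrences w = 1

/-- `(s, E)` is a condition of Zhang's forcing `Z_G`: `s` is a finite partial
injection and `E` a finite set of nice words. -/
def ZCond (G : Subgroup Perm') (s : Set (ℕ × ℕ)) (E : Set Word) : Prop :=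
  s.Finite ∧ PartInj s ∧ E.Finite ∧ ∀ w ∈ E, IsNice G w

/-- `(t, F) ≤ (s, E)` in Zhang's forcing: `s ⊆ t`, `E ⊆ F`, and
`fix(w[t]) = fix(w[s])` for every `w ∈ E`. -/
def ZLe (t : Set (ℕ × ℕ)) (F : Set Word) (s : Set (ℕ × ℕ)) (E : Set Word) : Prop :=
  s ⊆ t ∧ E ⊆ F ∧ ∀ w ∈ E, wordFix t w = wordFix s w

/-- An injective tree: a nonempty set of finite sequences closed under initial
segments, all of whose elements are injective sequences. -/
def IsInjTree (T : Set (List ℕ)) : Prop :=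
  T.Nonempty ∧ (∀ t ∈ T, ∀ s : List ℕ, s <+: t → s ∈ T) ∧ ∀ t ∈ T, t.Nodup

/-- `T ∈ I_i(P)⁺`: an injective tree such that for every `s ∈ T` and every
finite `P₀ ⊆ P` there are `t ∈ T` extending `s` and `k ∈ dom(t) \ dom(s)` with
`t(k) ≠ f(k)` for all `f ∈ P₀`. -/
def TreePos (P : Set Perm') (T : Set (List ℕ)) : Prop :=
  IsInjTree T ∧
  ∀ s ∈ T, ∀ P₀ ⊆ P, P₀.Finite →
    ∃ t ∈ T, s <+: t ∧ ∃ k, s.length ≤ k ∧ k < t.length ∧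
      ∀ f ∈ P₀, t.getD k 0 ≠ f k

/-- A set `O` is closed under a relation `R` and its inverse. -/
def RelClosed (R : ℕ → ℕ → Prop) (O : Set ℕ) : Prop :=
  ∀ a b, R a b → (a ∈ O ↔ b ∈ O)

/-- The orbit of `n` under the (partial injective) relation `R`: the smallest
set containing `n` closed under applications of `R` and `R⁻¹`. -/
def relOrbit (R : ℕ → ℕ → Prop) (n : ℕ) : Set ℕ :=
  ⋂₀ {O : Set ℕ | n ∈ O ∧ RelClosed R O}

/-- The set of all orbits of the relation `R`. -/
def relOrbits (R : ℕ → ℕ → Prop) : Set (Set ℕ) := {O | ∃ n, O = relOrbit R n}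

/-- Domain of a relation. -/
def relDom (R : ℕ → ℕ → Prop) : Set ℕ := {a | ∃ b, R a b}

/-- Range of a relation. -/
def relRan (R : ℕ → ℕ → Prop) : Set ℕ := {b | ∃ a, R a b}

/-- The set of closed orbits of `R`: those orbits contained in `dom ∩ ran`. -/
def relClosedOrbits (R : ℕ → ℕ → Prop) : Set (Set ℕ) :=
  {O ∈ relOrbits R | O ⊆ relDom R ∩ relRan R}

/-- The relation of a partial injection given as a set of pairs. -/
def sRel (s : Set (ℕ × ℕ)) : ℕ → ℕ → Prop := fun a b => (a, b) ∈ s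

/-- The relation (graph) of a permutation of `ℕ`. -/
def permRel (f : Perm') : ℕ → ℕ → Prop := fun a b => f a = b

/-- A partial injection `s` is nice: every closed orbit has its minimum below
the minimum of the complement of the union of all closed orbits. -/
def NiceInj (s : Set (ℕ × ℕ)) : Prop :=
  ∀ O ∈ relClosedOrbits (sRel s),
    sInf O < sInf {n : ℕ | n ∉ ⋃₀ relClosedOrbits (sRel s)}

/-- The position of a closed orbit `O` of `s` in the well-order of closed
orbits by their minima. -/
def orbitIndex (s : Set (ℕ × ℕ)) (O : Set ℕ) : ℕ :=
  {P ∈ relClosedOrbits (sRel s) | sInf P < sInf O}.ncard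

/-- `s` codes `r`, i.e. `o_s ⊆ r`: the `n`-th closed orbit (in the well-order
by minima) has cardinality congruent to `r(n)` mod 2. -/
def CodesReal (s : Set (ℕ × ℕ)) (r : ℕ → Fin 2) : Prop :=
  ∀ O ∈ relClosedOrbits (sRel s), O.ncard % 2 = (r (orbitIndex s O) : ℕ)

/-- `(s, E)` is a condition of `Z_G(r)`. -/
def ZrCond (G : Subgroup Perm') (r : ℕ → Fin 2)
    (s : Set (ℕ × ℕ)) (E : Set Word) : Prop :=
  ZCond G s E ∧ NiceInj s ∧ CodesReal s r

/-- The `n`-th prime. -/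
def pPrime (n : ℕ) : ℕ := Nat.nth Nat.Prime n

/-- The orbit-coding function `o†`: `o†(n)` is the number of closed orbits of
`R` of cardinality `p_n`, modulo 2. -/
def odag (R : ℕ → ℕ → Prop) (n : ℕ) : ℕ :=
  {O ∈ relClosedOrbits R | O.ncard = pPrime n}.ncard % 2

/-- `v^k`: the word `v` concatenated `k` times. -/
def wpow (v : Word) (k : ℕ) : Word := (List.replicate k v).flatten

/-- `w ∈ W†_G`: a nice word that is indecomposable, i.e. not of the form `v^k`
for a nice word `v` and `k > 1`. -/
def Indecomposable (G : Subgroup Perm') (w : Word) : Prop :=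
  IsNice G w ∧ ¬∃ v : Word, IsNice G v ∧ ∃ k : ℕ, 1 < k ∧ w = wpow v k

/-- The inverse of a letter. -/
def letterInv : Letter → Letter
  | Sum.inl g => Sum.inl g⁻¹
  | Sum.inr b => Sum.inr (!b)

/-- The inverse of a word. -/
def wordInv (w : Word) : Word := (w.map letterInv).reverse

/-- `E` is closed under cyclic permutations and inverses thereof within `W*_G`. -/
def CyclClosed (G : Subgroup Perm') (E : Set Word) : Prop :=
  ∀ w ∈ E, ∀ w₀ w₁ : Word, w = w₀ ++ w₁ →
    (IsNice G (w₁ ++ w₀) → w₁ ++ w₀ ∈ E) ∧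
    (IsNice G (wordInv (w₁ ++ w₀)) → wordInv (w₁ ++ w₀) ∈ E)

/-- `(s, E)` is a condition of `Z†_G(r)`: a Zhang condition such that `E` is
closed under cyclic permutations and inverses thereof in `W*_G`, and whenever
`w = v^k ∈ E` with `v ∈ W†_G` then `v^l ∈ E` for all `0 < l ≤ k` and `o†_{v[s]}`
codes `r` up to `n` for every `n` with `p_n ≤ k`. -/
def ZdagCond (G : Subgroup Perm') (r : ℕ → Fin 2)
    (s : Set (ℕ × ℕ)) (E : Set Word) : Prop :=
  ZCond G s E ∧ CyclClosed G E ∧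
  ∀ w ∈ E, ∀ v : Word, ∀ k : ℕ, Indecomposable G v → w = wpow v k →
    (∀ l : ℕ, 0 < l → l ≤ k → wpow v l ∈ E) ∧
    (∀ n : ℕ, pPrime n ≤ k → ∀ i ≤ n, odag (wordRel s v) i = (r i : ℕ))

/-- Substituting the permutation `f` for `x` in a letter. -/
def letterPerm (f : Perm') : Letter → Perm'
  | Sum.inl g => g
  | Sum.inr true => f
  | Sum.inr false => f⁻¹

/-- `w[f]`: evaluation of a word at the permutation `f`. -/
def wordPerm (f : Perm') (w : Word) : Perm' := (w.map (letterPerm f)).prod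

/-- Two functions are eventually different. -/
def EvDiff (f g : ℕ → ℕ) : Prop := {k : ℕ | f k = g k}.Finite

/-- A set of permutations is an eventually different family. -/
def EDFamily (P : Set Perm') : Prop :=
  ∀ f ∈ P, ∀ g ∈ P, f ≠ g → EvDiff f g


/-! ### Auxiliary lemmas for `statement3` -/

/-- Allowed adjacency in a reduced (nice) word: no two group letters adjacent,
and no `x` adjacent to `x⁻¹`. -/
def adjOK : Letter → Letter → Prop
  | Sum.inl _, Sum.inl _ => False
  | Sum.inr c, Sum.inr d => c = d
  | _, _ => True

lemma wordRel_mono {s s' : Set (ℕ × ℕ)} (hss : s ⊆ s') :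
    ∀ w : Word, ∀ a b, wordRel s w a b → wordRel s' w a b := by
  intro w
  induction w with
  | nil => intro a b h; exact h
  | cons l u ih =>
    rintro a b ⟨c, hc, hl⟩
    refine ⟨c, ih a c hc, ?_⟩
    cases l with
    | inl g => exact hl
    | inr bo => cases bo with
      | true => exact hss hl
      | false => exact hss hl

lemma wordRel_append (s : Set (ℕ × ℕ)) :
    ∀ (u v : Word) (a b : ℕ),
      wordRel s (u ++ v) a b ↔ ∃ c, wordRel s v a c ∧ wordRel s u c b := by
  intro u
  induction u with
  | nil =>
    intro v a b
    simp only [List.nil_append, wordRel]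
    constructor
    · intro h; exact ⟨b, h, rfl⟩
    · rintro ⟨c, hc, rfl⟩; exact hc
  | cons l u ih =>
    intro v a b
    simp only [List.cons_append, wordRel]
    constructor
    · rintro ⟨c, hc, hl⟩
      obtain ⟨d, hd, hud⟩ := (ih v a c).1 hc
      exact ⟨d, hd, c, hud, hl⟩
    · rintro ⟨c, hc, d, hd, hl⟩
      exact ⟨d, (ih v a d).2 ⟨c, hc, hd⟩, hl⟩

lemma chain'_replicate_inr (n : ℕ) (b : Bool) :
    List.Chain' adjOK (List.replicate n (Sum.inr b : Letter)) := by
  induction n with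
  | zero => simp [List.Chain']
  | succ n ih =>
    cases n with
    | zero => simp [List.Chain']
    | succ n' =>
      rw [List.replicate_succ, List.replicate_succ]; simp only [List.Chain', List.isChain_cons_cons]
      rw [List.replicate_succ] at ih
      exact ⟨rfl, ih⟩

lemma xpow_eq_replicate (k : ℤ) (hk : k ≠ 0) :
    ∃ n b, 0 < n ∧ xpow k = List.replicate n (Sum.inr b : Letter) ∧ (0 < k → b = true) := by
  rcases le_or_gt 0 k with h | h
  · refine ⟨k.toNat, true, ?_, ?_, fun _ => rfl⟩
    · omega
    · simp [xpow, h]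
  · refine ⟨(-k).toNat, false, by omega, ?_, by omega⟩
    simp [xpow, not_le.2 h]

lemma chain'_blockWord (p : Perm' × ℤ) (hp : p.2 ≠ 0) :
    List.Chain' adjOK (blockWord p) := by
  obtain ⟨n, b, hn, hrep, -⟩ := xpow_eq_replicate p.2 hp
  rw [blockWord, hrep]
  cases n with
  | zero => omega
  | succ n' =>
    rw [List.replicate_succ]; simp only [List.Chain', List.isChain_cons_cons]
    constructor
    · trivial
    · rw [← List.replicate_succ]; exact chain'_replicate_inr _ _

lemma blockWord_head (p : Perm' × ℤ) : (blockWord p).head? = some (Sum.inl p.1) := rfl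

lemma blockWord_ne_nil (p : Perm' × ℤ) : blockWord p ≠ [] := by simp [blockWord]

lemma blockWord_getLast (p : Perm' × ℤ) (hp : p.2 ≠ 0) :
    ∃ b : Bool, (blockWord p).getLast? = some (Sum.inr b) ∧ (0 < p.2 → b = true) := by
  obtain ⟨n, b, hn, hrep, hb⟩ := xpow_eq_replicate p.2 hp
  refine ⟨b, ?_, hb⟩
  rw [blockWord, hrep]
  cases n with
  | zero => omega
  | succ n' =>
    rw [List.getLast?_cons]
    simp [List.getLast?_replicate]

lemma blocks_chain : ∀ bs : List (Perm' × ℤ), (∀ p ∈ bs, p.2 ≠ 0) →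
    List.Chain' adjOK (bs.map blockWord).flatten ∧
    (bs ≠ [] → ∃ g, ((bs.map blockWord).flatten).head? = some (Sum.inl g)) := by
  intro bs
  induction bs with
  | nil => intro _; simp [List.Chain']
  | cons p bs ih =>
    intro hall
    have hp : p.2 ≠ 0 := hall p (by simp)
    have ihc := ih (fun q hq => hall q (by simp [hq]))
    simp only [List.map_cons, List.flatten_cons]
    constructor
    · simp only [List.Chain', List.isChain_append]
      refine ⟨chain'_blockWord p hp, ihc.1, ?_⟩
      intro x hx y hy
      obtain ⟨b, hb, -⟩ := blockWord_getLast p hp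
      rw [hb] at hx
      simp only [Option.mem_def, Option.some.injEq] at hx
      subst hx
      rcases List.eq_nil_or_concat (bs.map blockWord).flatten with hnil | _
      · rw [hnil] at hy; simp at hy
      · have hbs : bs ≠ [] := by
          rintro rfl
          simp at hy
        obtain ⟨g, hg⟩ := ihc.2 hbs
        rw [hg] at hy
        simp only [Option.mem_def, Option.some.injEq] at hy
        subst hy
        trivial
    · intro _
      refine ⟨p.1, ?_⟩
      rw [blockWord]
      simp

lemma blocks_getLast : ∀ bs : List (Perm' × ℤ), ∀ p : Perm' × ℤ,
    bs.getLast? = some p → 0 < p.2 →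
    ((bs.map blockWord).flatten).getLast? = some (Sum.inr true : Letter) := by
  intro bs
  induction bs using List.reverseRecOn with
  | nil => intro p hp; simp at hp
  | append_singleton bs q ih =>
    intro p hp hpos
    rw [List.getLast?_append] at hp
    simp only [List.getLast?_singleton, Option.or_some, Option.some_or, Option.some.injEq] at hp
    subst hp
    simp only [List.map_append, List.map_cons, List.map_nil, List.flatten_append,
      List.flatten_cons, List.flatten_nil, List.append_nil]
    rw [List.getLast?_append]
    obtain ⟨b, hb, hbt⟩ := blockWord_getLast q (by omega)
    rw [hb, hbt hpos]
    rfl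

lemma nice_shape {G : Subgroup Perm'} {w : Word} (hw : IsNice G w) :
    List.Chain' adjOK w ∧ ∃ w'' : Word, w = w'' ++ [Sum.inr true] := by
  rcases hw with ⟨k, hk, rfl⟩ | ⟨bs, hne, hall, ⟨p, hlast, hpos⟩, rfl⟩
  · constructor
    · obtain ⟨n, b, -, hrep, -⟩ := xpow_eq_replicate (k : ℤ) (by exact_mod_cast hk.ne')
      rw [hrep]; exact chain'_replicate_inr _ _
    · refine List.getLast?_eq_some_iff.1 ?_
      have : xpow (k : ℤ) = List.replicate k (Sum.inr true : Letter) := by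
        simp [xpow]
      rw [this]
      cases k with
      | zero => omega
      | succ k' => simp [List.getLast?_replicate]
  · constructor
    · exact (blocks_chain bs (fun q hq => (hall q hq).2.2)).1
    · exact List.getLast?_eq_some_iff.1 (blocks_getLast bs p hlast hpos)

lemma nice_letters {G : Subgroup Perm'} {w : Word} (hw : IsNice G w)
    {g : Perm'} (hg : Sum.inl g ∈ w) : g ∈ G ∧ g ≠ 1 := by
  rcases hw with ⟨k, hk, rfl⟩ | ⟨bs, hne, hall, hlastp, rfl⟩
  · exfalso
    rcases le_or_gt 0 (k : ℤ) with h | h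
    · simp only [xpow, if_pos h] at hg
      exact absurd (List.eq_of_mem_replicate hg) (by simp)
    · omega
  · rw [List.mem_flatten] at hg
    obtain ⟨l, hl, hgl⟩ := hg
    rw [List.mem_map] at hl
    obtain ⟨q, hq, rfl⟩ := hl
    have h2 := hall q hq
    rw [blockWord, List.mem_cons] at hgl
    rcases hgl with h | h
    · obtain rfl : g = q.1 := Sum.inl.inj h
      exact ⟨h2.1, h2.2.1⟩
    · exfalso
      obtain ⟨n, b, -, hrep, -⟩ := xpow_eq_replicate q.2 h2.2.2
      rw [hrep] at h
      exact absurd (List.eq_of_mem_replicate h) (by simp)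


lemma fix_insert_eq (s : Set (ℕ × ℕ)) (k m : ℕ) (L : Set Perm') (w : Word)
    (hLw : ∀ g : Perm', Sum.inl g ∈ w → g ∈ L)
    (hchain : List.Chain' adjOK w)
    (hlast : ∃ w'' : Word, w = w'' ++ [(Sum.inr true : Letter)])
    (hkd : ∀ c, (k, c) ∉ s) (hkr : ∀ c, (c, k) ∉ s)
    (hmd : ∀ c, (m, c) ∉ s) (hmr : ∀ c, (c, m) ∉ s)
    (hkm : m ≠ k)
    (hgkd : ∀ g ∈ L, ∀ c, ((g : Perm') k, c) ∉ s) (hgkr : ∀ g ∈ L, ∀ c, (c, (g : Perm') k) ∉ s)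
    (hgkfix : ∀ g ∈ L, (g : Perm') k ≠ k) (hgkm : ∀ g ∈ L, (g : Perm') k ≠ m)
    (hgmd : ∀ g ∈ L, ∀ c, ((g : Perm') m, c) ∉ s) (hgmr : ∀ g ∈ L, ∀ c, (c, (g : Perm') m) ∉ s)
    (hgmfix : ∀ g ∈ L, (g : Perm') m ≠ m) (hgmk : ∀ g ∈ L, (g : Perm') m ≠ k) :
    wordFix (insert (k, m) s) w = wordFix s w := by
  set s' : Set (ℕ × ℕ) := insert (k, m) s with hs'
  ext n
  simp only [wordFix, Set.mem_setOf_eq]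
  constructor
  swap
  · exact wordRel_mono (Set.subset_insert _ _) w n n
  intro hn
  obtain ⟨w'', hw''⟩ := hlast
  -- the path starts with an application of `x`, so `n ∈ dom s'`
  have hstart : ∃ c, (n, c) ∈ s' := by
    rw [hw''] at hn
    obtain ⟨c, hc, -⟩ := (wordRel_append s' w'' [Sum.inr true] n n).1 hn
    obtain ⟨d, hd, hl⟩ := hc
    exact ⟨c, by rwa [← hd] at hl⟩
  by_cases hnk : n = k
  · -- Case I : the start is `k` itself; derive a contradiction
    subst hnk
    exfalso
    have keyI : ∀ u : Word, u <:+ w → ∀ c, wordRel s' u n c →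
        ((u = [] ∧ c = n) ∨ (u.head? = some (Sum.inr true) ∧ c = m) ∨
          (∃ g ∈ L, u.head? = some (Sum.inl g) ∧ c = (g : Perm') m)) := by
      intro u
      induction u with
      | nil => intro _ c hc; exact Or.inl ⟨rfl, hc.symm⟩
      | cons l u' ih =>
        intro hsuf c hc
        obtain ⟨d, hd, hl⟩ := hc
        have hsuf' : u' <:+ w := (List.suffix_cons l u').trans hsuf
        have hch : List.Chain' adjOK (l :: u') := hchain.suffix hsuf
        have hadj : ∀ l₂ : Letter, u'.head? = some l₂ → adjOK l l₂ := by
          intro l₂ h2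
          cases u' with
          | nil => simp at h2
          | cons a rest =>
            obtain rfl : a = l₂ := by simpa using h2
            exact (List.isChain_cons_cons.1 hch).1
        rcases ih hsuf' d hd with ⟨rfl, rfl⟩ | ⟨hhead, rfl⟩ | ⟨g, hgL, hhead, rfl⟩
        · -- start state: `l` is the last letter of `w`, hence `x`
          have hleq : l = Sum.inr true := by
            obtain ⟨pre, hpre⟩ := hsuf
            rw [hw''] at hpre
            have := congrArg List.getLast? hpre
            simpa using this
          subst hleq
          rcases Set.mem_insert_iff.1 hl with h | h
          · rw [Prod.mk.injEq] at h
            exact Or.inr (Or.inl ⟨rfl, h.2⟩)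
          · exact absurd h (hkd c)
        · -- state M_x
          cases l with
          | inl g =>
            have hgL : g ∈ L := hLw g (hsuf.subset List.mem_cons_self)
            exact Or.inr (Or.inr ⟨g, hgL, rfl, hl.symm⟩)
          | inr b =>
            cases b with
            | true =>
              rcases Set.mem_insert_iff.1 hl with h | h
              · rw [Prod.mk.injEq] at h
                exact absurd h.1 hkm
              · exact absurd h (hmd c)
            | false => exact absurd (hadj _ hhead) (by simp [adjOK])
        · -- state GM
          cases l with
          | inl g' => exact absurd (hadj _ hhead) (by simp [adjOK])
          | inr b =>
            cases b with
            | true =>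
              rcases Set.mem_insert_iff.1 hl with h | h
              · rw [Prod.mk.injEq] at h
                exact absurd h.1 (hgmk g hgL)
              · exact absurd h (hgmd g hgL c)
            | false =>
              rcases Set.mem_insert_iff.1 hl with h | h
              · rw [Prod.mk.injEq] at h
                exact absurd h.2 (hgmfix g hgL)
              · exact absurd h (hgmr g hgL c)
    rcases keyI w (List.suffix_refl w) n hn with ⟨hwnil, -⟩ | ⟨-, hnm⟩ | ⟨g, hgL, -, hnm⟩
    · rw [hw''] at hwnil; simp at hwnil
    · exact hkm hnm.symm
    · exact hgmk g hgL hnm.symm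
  · -- Case II : the start lies in the domain of `s`
    obtain ⟨c₀, hc₀⟩ := hstart
    have hns : (n, c₀) ∈ s := by
      rcases Set.mem_insert_iff.1 hc₀ with h | h
      · rw [Prod.mk.injEq] at h
        exact absurd h.1 hnk
      · exact h
    have hnm : n ≠ m := fun h => hmd c₀ (h ▸ hns)
    have keyII : ∀ u : Word, u <:+ w → ∀ c, wordRel s' u n c →
        ((wordRel s u n c ∧ c ≠ k ∧ c ≠ m) ∨
          (c = k ∧ ∃ g : Perm', u.head? = some (Sum.inl g)) ∨
          (c = m ∧ u.head? = some (Sum.inr true)) ∨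
          (c = m ∧ ∃ g : Perm', u.head? = some (Sum.inl g)) ∨
          (c = k ∧ u.head? = some (Sum.inr false)) ∨
          (∃ g ∈ L, c = (g : Perm') k ∧ u.head? = some (Sum.inl g)) ∨
          (∃ g ∈ L, c = (g : Perm') m ∧ u.head? = some (Sum.inl g))) := by
      intro u
      induction u with
      | nil =>
        intro _ c hc
        have hcn : n = c := hc
        exact Or.inl ⟨hc, fun h => hnk (hcn ▸ h), fun h => hnm (hcn ▸ h)⟩
      | cons l u' ih =>
        intro hsuf c hc
        obtain ⟨d, hd, hl⟩ := hc
        have hsuf' : u' <:+ w := (List.suffix_cons l u').trans hsuf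
        have hch : List.Chain' adjOK (l :: u') := hchain.suffix hsuf
        have hadj : ∀ l₂ : Letter, u'.head? = some l₂ → adjOK l l₂ := by
          intro l₂ h2
          cases u' with
          | nil => simp at h2
          | cons a rest =>
            obtain rfl : a = l₂ := by simpa using h2
            exact (List.isChain_cons_cons.1 hch).1
        rcases ih hsuf' d hd with ⟨hwr, hdk, hdm⟩ | ⟨rfl, g, hhead⟩ | ⟨rfl, hhead⟩ |
          ⟨rfl, g, hhead⟩ | ⟨rfl, hhead⟩ | ⟨g, hgL, rfl, hhead⟩ | ⟨g, hgL, rfl, hhead⟩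
        · -- Old
          cases l with
          | inl g =>
            by_cases hck : c = k
            · exact Or.inr (Or.inl ⟨hck, g, rfl⟩)
            by_cases hcm : c = m
            · exact Or.inr (Or.inr (Or.inr (Or.inl ⟨hcm, g, rfl⟩)))
            · exact Or.inl ⟨⟨d, hwr, hl⟩, hck, hcm⟩
          | inr b =>
            cases b with
            | true =>
              rcases Set.mem_insert_iff.1 hl with h | h
              · rw [Prod.mk.injEq] at h
                exact absurd h.1 hdk
              · exact Or.inl ⟨⟨d, hwr, h⟩, fun hc => hkr d (hc ▸ h), fun hc => hmr d (hc ▸ h)⟩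
            | false =>
              rcases Set.mem_insert_iff.1 hl with h | h
              · rw [Prod.mk.injEq] at h
                exact absurd h.2 hdm
              · exact Or.inl ⟨⟨d, hwr, h⟩, fun hc => hkd d (hc ▸ h), fun hc => hmd d (hc ▸ h)⟩
        · -- K_g
          cases l with
          | inl g' => exact absurd (hadj _ hhead) (by simp [adjOK])
          | inr b =>
            cases b with
            | true =>
              rcases Set.mem_insert_iff.1 hl with h | h
              · rw [Prod.mk.injEq] at h
                exact Or.inr (Or.inr (Or.inl ⟨h.2, rfl⟩))
              · exact absurd h (hkd c)
            | false =>
              rcases Set.mem_insert_iff.1 hl with h | h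
              · rw [Prod.mk.injEq] at h
                exact absurd h.2.symm (fun hc => hkm (hc ▸ rfl))
              · exact absurd h (hkr c)
        · -- M_x
          cases l with
          | inl g =>
            have hgL : g ∈ L := hLw g (hsuf.subset List.mem_cons_self)
            exact Or.inr (Or.inr (Or.inr (Or.inr (Or.inr (Or.inr ⟨g, hgL, hl.symm, rfl⟩)))))
          | inr b =>
            cases b with
            | true =>
              rcases Set.mem_insert_iff.1 hl with h | h
              · rw [Prod.mk.injEq] at h
                exact absurd h.1 hkm
              · exact absurd h (hmd c)
            | false => exact absurd (hadj _ hhead) (by simp [adjOK])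
        · -- M_g
          cases l with
          | inl g' => exact absurd (hadj _ hhead) (by simp [adjOK])
          | inr b =>
            cases b with
            | true =>
              rcases Set.mem_insert_iff.1 hl with h | h
              · rw [Prod.mk.injEq] at h
                exact absurd h.1 hkm
              · exact absurd h (hmd c)
            | false =>
              rcases Set.mem_insert_iff.1 hl with h | h
              · rw [Prod.mk.injEq] at h
                exact Or.inr (Or.inr (Or.inr (Or.inr (Or.inl ⟨h.1, rfl⟩))))
              · exact absurd h (hmr c)
        · -- K_b
          cases l with
          | inl g =>
            have hgL : g ∈ L := hLw g (hsuf.subset List.mem_cons_self)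
            exact Or.inr (Or.inr (Or.inr (Or.inr (Or.inr (Or.inl ⟨g, hgL, hl.symm, rfl⟩)))))
          | inr b =>
            cases b with
            | true => exact absurd (hadj _ hhead) (by simp [adjOK])
            | false =>
              rcases Set.mem_insert_iff.1 hl with h | h
              · rw [Prod.mk.injEq] at h
                exact absurd h.2.symm (fun hc => hkm (hc ▸ rfl))
              · exact absurd h (hkr c)
        · -- GK
          cases l with
          | inl g' => exact absurd (hadj _ hhead) (by simp [adjOK])
          | inr b =>
            cases b with
            | true =>
              rcases Set.mem_insert_iff.1 hl with h | h
              · rw [Prod.mk.injEq] at h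
                exact absurd h.1 (hgkfix g hgL)
              · exact absurd h (hgkd g hgL c)
            | false =>
              rcases Set.mem_insert_iff.1 hl with h | h
              · rw [Prod.mk.injEq] at h
                exact absurd h.2 (hgkm g hgL)
              · exact absurd h (hgkr g hgL c)
        · -- GM
          cases l with
          | inl g' => exact absurd (hadj _ hhead) (by simp [adjOK])
          | inr b =>
            cases b with
            | true =>
              rcases Set.mem_insert_iff.1 hl with h | h
              · rw [Prod.mk.injEq] at h
                exact absurd h.1 (hgmk g hgL)
              · exact absurd h (hgmd g hgL c)
            | false =>
              rcases Set.mem_insert_iff.1 hl with h | h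
              · rw [Prod.mk.injEq] at h
                exact absurd h.2 (hgmfix g hgL)
              · exact absurd h (hgmr g hgL c)
    rcases keyII w (List.suffix_refl w) n hn with ⟨h, -, -⟩ | ⟨h, -⟩ | ⟨h, -⟩ | ⟨h, -⟩ |
      ⟨h, -⟩ | ⟨g, hgL, h, -⟩ | ⟨g, hgL, h, -⟩
    · exact h
    · exact absurd h hnk
    · exact absurd h hnm
    · exact absurd h hnm
    · exact absurd h hnk
    · exact absurd (h ▸ hns) (hgkd g hgL c₀)
    · exact absurd (h ▸ hns) (hgmd g hgL c₀)

/-- The generic hitting lemma for Zhang's forcing `Z_G`. -/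
theorem statement3 (G : Subgroup Perm') (hG : Cofinitary G)
    (T : Set (List ℕ)) (hT : TreePos (G : Set Perm') T)
    (t : List ℕ) (ht : t ∈ T)
    (s : Set (ℕ × ℕ)) (E : Set Word) (hc : ZCond G s E) :
    ∃ s' : Set (ℕ × ℕ), ZCond G s' E ∧ ZLe s' E s E ∧
      ∃ t' ∈ T, t <+: t' ∧
        ∃ k : ℕ, t.length ≤ k ∧ k < t'.length ∧ (k, t'.getD k 0) ∈ s' := by
  classical
  obtain ⟨⟨hTne, hTclosed, hTnodup⟩, hTpos⟩ := hT
  obtain ⟨hsfin, hsinj, hEfin, hEnice⟩ := hc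
  -- the (finitely many) group letters occurring in `E`
  set L : Set Perm' := {g : Perm' | ∃ w ∈ E, Sum.inl g ∈ w} with hLdef
  have hLG : ∀ g ∈ L, g ∈ G ∧ g ≠ 1 := by
    rintro g ⟨w, hw, hgw⟩
    exact nice_letters (hEnice w hw) hgw
  have hLfin : L.Finite := by
    have hsub : L ⊆ ⋃ w ∈ E, {g : Perm' | Sum.inl g ∈ w} := by
      rintro g ⟨w, hw, hgw⟩
      exact Set.mem_biUnion hw hgw
    refine Set.Finite.subset (Set.Finite.biUnion hEfin ?_) hsub
    intro w _
    have heq : {g : Perm' | Sum.inl g ∈ w} = Sum.inl ⁻¹' {l : Letter | l ∈ w} := rfl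
    rw [heq]
    exact (w.finite_toSet).preimage (Sum.inl_injective.injOn)
  -- the finite set of "bad" values
  have hpdomfin : (pdom s).Finite := hsfin.image _
  have hpranfin : (pran s).Finite := hsfin.image _
  set D : Set ℕ := pdom s ∪ pran s ∪
      ⋃ g ∈ L, ({n : ℕ | (g : Perm') n = n} ∪
        (fun n => (g : Perm') n) ⁻¹' (pdom s ∪ pran s)) with hDdef
  have hDfin : D.Finite := by
    refine (hpdomfin.union hpranfin).union (Set.Finite.biUnion hLfin ?_)
    intro g hg
    exact (hG g (hLG g hg).1 (hLG g hg).2).union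
      ((hpdomfin.union hpranfin).preimage ((g : Perm').injective.injOn))
  -- the finite set of permutations to avoid
  set P₀ : Set Perm' := insert 1 (L ∪ (fun g : Perm' => g⁻¹) '' L) with hP₀def
  have hP₀G : P₀ ⊆ (G : Set Perm') := by
    intro f hf
    rcases Set.mem_insert_iff.1 hf with rfl | hf'
    · exact one_mem G
    rcases hf' with hf'' | ⟨g, hg, rfl⟩
    · exact (hLG f hf'').1
    · exact inv_mem (hLG g hg).1
  have hP₀fin : P₀.Finite := ((hLfin.union (hLfin.image _))).insert 1
  -- iterate the positivity of the tree
  have step : ∀ p : {l : List ℕ // l ∈ T}, ∃ q : {l : List ℕ // l ∈ T},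
      p.1 <+: q.1 ∧ ∃ k, p.1.length ≤ k ∧ k < q.1.length ∧
        ∀ f ∈ P₀, q.1.getD k 0 ≠ f k := by
    rintro ⟨l, hl⟩
    obtain ⟨t', ht', hpre, k, h1, h2, h3⟩ := hTpos l hl P₀ hP₀G hP₀fin
    exact ⟨⟨t', ht'⟩, hpre, k, h1, h2, h3⟩
  choose next hpre kf hk1 hk2 havoid using step
  set seq : ℕ → {l : List ℕ // l ∈ T} :=
    fun n => Nat.rec ⟨t, ht⟩ (fun _ p => next p) n with hseqdef
  have hseqsucc : ∀ i, seq (i + 1) = next (seq i) := fun i => rfl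
  set K : ℕ → ℕ := fun i => kf (seq i) with hKdef
  have hchain2 : ∀ i j, i ≤ j → (seq i).1 <+: (seq j).1 := by
    intro i j hij
    induction j, hij using Nat.le_induction with
    | base => exact List.prefix_refl _
    | succ j hij ih =>
      refine ih.trans ?_
      rw [hseqsucc]
      exact hpre (seq j)
  have hKmono : StrictMono K := by
    apply strictMono_nat_of_lt_succ
    intro i
    have h1' : K i < (seq (i + 1)).1.length := by
      rw [hseqsucc]; exact hk2 (seq i)
    have h2' : (seq (i + 1)).1.length ≤ K (i + 1) := hk1 (seq (i + 1))
    omega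
  have hKlen : ∀ i, t.length ≤ K i := by
    intro i
    have h1' : (seq 0).1.length ≤ (seq i).1.length :=
      (hchain2 0 i (Nat.zero_le i)).length_le
    have h2' : (seq i).1.length ≤ K i := hk1 (seq i)
    exact le_trans (by exact h1') h2'
  set Dfin : Finset ℕ := hDfin.toFinset with hDfindef
  set B : ℕ := Dfin.sup id + 1 with hBdef
  have hKD : ∀ i, B ≤ i → K i ∉ D := by
    intro i hi hKiD
    have h1' : K i ∈ Dfin := hDfin.mem_toFinset.2 hKiD
    have h2' : K i ≤ Dfin.sup id := Finset.le_sup (f := id) h1'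
    have h3' : i ≤ K i := hKmono.le_apply
    omega
  set N : ℕ := B + Dfin.card + 1 with hNdef
  set tN : List ℕ := (seq N).1 with htNdef
  have htN : tN ∈ T := (seq N).2
  have hvalid : ∀ j, j ≤ Dfin.card → K (B + j) < tN.length := by
    intro j hj
    have h1' : K (B + j) < (seq (B + j + 1)).1.length := by
      rw [hseqsucc]; exact hk2 (seq (B + j))
    have h2' : (seq (B + j + 1)).1.length ≤ tN.length :=
      (hchain2 (B + j + 1) N (by omega)).length_le
    omega
  set v : ℕ → ℕ := fun j => tN.getD (K (B + j)) 0 with hvdef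
  have hvinj : Set.InjOn v ↑(Finset.range (Dfin.card + 1)) := by
    intro a ha b hb hab
    rw [Finset.mem_coe, Finset.mem_range] at ha hb
    have hKa := hvalid a (by omega)
    have hKb := hvalid b (by omega)
    rw [hvdef] at hab
    simp only at hab
    rw [List.getD_eq_getElem _ _ hKa, List.getD_eq_getElem _ _ hKb] at hab
    have := ((hTnodup tN htN).getElem_inj_iff).1 hab
    exact Nat.add_left_cancel (hKmono.injective this)
  have hpig : ∃ j, j ≤ Dfin.card ∧ v j ∉ D := by
    by_contra hcon
    push_neg at hcon
    have hsub : (Finset.range (Dfin.card + 1)).image v ⊆ Dfin := by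
      intro x hx
      rw [Finset.mem_image] at hx
      obtain ⟨j, hj, rfl⟩ := hx
      rw [Finset.mem_range] at hj
      exact hDfin.mem_toFinset.2 (hcon j (by omega))
    have hcard : ((Finset.range (Dfin.card + 1)).image v).card = Dfin.card + 1 := by
      rw [Finset.card_image_of_injOn hvinj, Finset.card_range]
    have := Finset.card_le_card hsub
    omega
  obtain ⟨j, hj, hmD⟩ := hpig
  set k : ℕ := K (B + j) with hkdef
  set m : ℕ := v j with hmdef
  have hkD : k ∉ D := hKD (B + j) (by omega)
  have hklen : k < tN.length := hvalid j hj
  -- transfer the avoidance property to `tN`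
  have havoidj : ∀ f ∈ P₀, m ≠ f k := by
    intro f hf heq
    have hpre' : (seq (B + j + 1)).1 <+: tN := hchain2 (B + j + 1) N (by omega)
    have hlt : k < (seq (B + j + 1)).1.length := by
      rw [hseqsucc]; exact hk2 (seq (B + j))
    have hgetD : (seq (B + j + 1)).1.getD k 0 = tN.getD k 0 := by
      rw [List.getD_eq_getElem _ _ hlt, List.getD_eq_getElem _ _ hklen]
      exact hpre'.getElem hlt
    have := havoid (seq (B + j)) f hf
    rw [← hseqsucc] at this
    apply this
    rw [hgetD]
    exact heq
  -- unpack the membership facts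
  have hkd : ∀ c, (k, c) ∉ s := fun c hc =>
    hkD (Or.inl (Or.inl ⟨(k, c), hc, rfl⟩))
  have hkr : ∀ c, (c, k) ∉ s := fun c hc =>
    hkD (Or.inl (Or.inr ⟨(c, k), hc, rfl⟩))
  have hmd : ∀ c, (m, c) ∉ s := fun c hc =>
    hmD (Or.inl (Or.inl ⟨(m, c), hc, rfl⟩))
  have hmr : ∀ c, (c, m) ∉ s := fun c hc =>
    hmD (Or.inl (Or.inr ⟨(c, m), hc, rfl⟩))
  have hkm : m ≠ k := by
    have := havoidj 1 (Set.mem_insert _ _)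
    simpa using this
  have hgkd : ∀ g ∈ L, ∀ c, ((g : Perm') k, c) ∉ s := fun g hg c hc =>
    hkD (Or.inr (Set.mem_biUnion hg (Or.inr (Or.inl ⟨((g : Perm') k, c), hc, rfl⟩))))
  have hgkr : ∀ g ∈ L, ∀ c, (c, (g : Perm') k) ∉ s := fun g hg c hc =>
    hkD (Or.inr (Set.mem_biUnion hg (Or.inr (Or.inr ⟨(c, (g : Perm') k), hc, rfl⟩))))
  have hgkfix : ∀ g ∈ L, (g : Perm') k ≠ k := fun g hg h =>
    hkD (Or.inr (Set.mem_biUnion hg (Or.inl h)))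
  have hgkm : ∀ g ∈ L, (g : Perm') k ≠ m := by
    intro g hg h
    exact havoidj g (Set.mem_insert_iff.2 (Or.inr (Or.inl hg))) h.symm
  have hgmd : ∀ g ∈ L, ∀ c, ((g : Perm') m, c) ∉ s := fun g hg c hc =>
    hmD (Or.inr (Set.mem_biUnion hg (Or.inr (Or.inl ⟨((g : Perm') m, c), hc, rfl⟩))))
  have hgmr : ∀ g ∈ L, ∀ c, (c, (g : Perm') m) ∉ s := fun g hg c hc =>
    hmD (Or.inr (Set.mem_biUnion hg (Or.inr (Or.inr ⟨(c, (g : Perm') m), hc, rfl⟩))))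
  have hgmfix : ∀ g ∈ L, (g : Perm') m ≠ m := fun g hg h =>
    hmD (Or.inr (Set.mem_biUnion hg (Or.inl h)))
  have hgmk : ∀ g ∈ L, (g : Perm') m ≠ k := by
    intro g hg h
    have hinv : m = (g⁻¹ : Perm') k := by
      rw [← h]; simp
    exact havoidj g⁻¹ (Set.mem_insert_iff.2 (Or.inr (Or.inr ⟨g, hg, rfl⟩))) hinv
  -- the new condition
  refine ⟨insert (k, m) s, ⟨hsfin.insert _, ⟨?_, ?_⟩, hEfin, hEnice⟩, ?_, tN, htN,
    hchain2 0 N (Nat.zero_le N), k, hKlen (B + j), hklen, ?_⟩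
  · -- functional
    intro a b c hab hac
    rcases Set.mem_insert_iff.1 hab with h1 | h1 <;>
      rcases Set.mem_insert_iff.1 hac with h2 | h2
    · rw [Prod.mk.injEq] at h1 h2
      rw [h1.2, h2.2]
    · rw [Prod.mk.injEq] at h1
      exact absurd (h1.1 ▸ h2) (hkd c)
    · rw [Prod.mk.injEq] at h2
      exact absurd (h2.1 ▸ h1) (hkd b)
    · exact hsinj.1 h1 h2
  · -- injective
    intro a b c hac hbc
    rcases Set.mem_insert_iff.1 hac with h1 | h1 <;>
      rcases Set.mem_insert_iff.1 hbc with h2 | h2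
    · rw [Prod.mk.injEq] at h1 h2
      rw [h1.1, h2.1]
    · rw [Prod.mk.injEq] at h1
      exact absurd (h1.2 ▸ h2) (hmr b)
    · rw [Prod.mk.injEq] at h2
      exact absurd (h2.2 ▸ h1) (hmr a)
    · exact hsinj.2 h1 h2
  · -- ZLe
    refine ⟨Set.subset_insert _ _, subset_rfl, ?_⟩
    intro w hw
    obtain ⟨hch, hlast⟩ := nice_shape (hEnice w hw)
    exact fix_insert_eq s k m L w (fun g hgw => ⟨w, hw, hgw⟩) hch hlast
      hkd hkr hmd hmr hkm hgkd hgkr hgkfix hgkm hgmd hgmr hgmfix hgmk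
  · -- the hitting pair belongs to the extended injection
    have : tN.getD k 0 = m := rfl
    rw [this]
    exact Set.mem_insert _ _
end
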